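/- Let S be a simple cycle of a rooted cactus digraph (G, r). Then there exists a strongly minimum element v_S among the vertices of S with respect to the preorder ≼ (v_S = r if r lies on S, and v_S is the nearest connecting point to r otherwise). Moreover, for any two vertices v, w of S other than v_S, one has v ∼ w (i.e., v ≼ w and w ≼ v). -/

import Mathlib

structure DirGraph (V : Type) where
  Adj : V → V → Prop
  loopless : ∀ v, ¬ Adj v v

namespace DirGraph

variable {V V' : Type}

/-- A walk is a nonempty list of vertices with consecutive arcs. -/
def IsWalk (G : DirGraph V) : List V → Prop
  | [] => False
  | [_] => True
  | a :: b :: l => G.Adj a b ∧ G.IsWalk (b :: l)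

def IsWalkFromTo (G : DirGraph V) (p : List V) (x y : V) : Prop :=
  G.IsWalk p ∧ p.head? = some x ∧ p.getLast? = some y

def StronglyConnected (G : DirGraph V) : Prop :=
  ∀ x y : V, ∃ p, G.IsWalkFromTo p x y

def IsSimplePath (G : DirGraph V) (p : List V) : Prop :=
  G.IsWalk p ∧ p.Nodup

def IsSimplePathFromTo (G : DirGraph V) (p : List V) (x y : V) : Prop :=
  G.IsSimplePath p ∧ p.head? = some x ∧ p.getLast? = some y

/-- The arcs of a walk given as a list of vertices. -/
def arcs (p : List V) : List (V × V) := p.zip p.tail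

/-- The preterminal (second-to-last) vertex of a path. -/
def preterminal (p : List V) : Option V := p.dropLast.getLast?

/-- A simple cycle: a closed walk whose vertices are distinct except for the
repeated endpoint. -/
def IsSimpleCycle (G : DirGraph V) (p : List V) : Prop :=
  G.IsWalk p ∧ 2 ≤ p.length ∧ p.head? = p.getLast? ∧ p.dropLast.Nodup

/-- Two cycles are equal as cycles when they have the same set of arcs. -/
def CycleEquiv (p q : List V) : Prop :=
  ∀ a : V × V, a ∈ arcs p ↔ a ∈ arcs q

/-- Each arc lies in exactly one simple cycle (up to arc-set equality). -/
def CactusArcCond (G : DirGraph V) : Prop :=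
  ∀ x y, G.Adj x y →
    (∃ p, G.IsSimpleCycle p ∧ (x, y) ∈ arcs p) ∧
    (∀ p q, G.IsSimpleCycle p → (x, y) ∈ arcs p →
      G.IsSimpleCycle q → (x, y) ∈ arcs q → CycleEquiv p q)

/-- A cactus digraph: strongly connected and each arc lies in exactly one
simple cycle. -/
def IsCactus (G : DirGraph V) : Prop :=
  G.StronglyConnected ∧ G.CactusArcCond

noncomputable def inDeg (G : DirGraph V) (v : V) : ℕ := Nat.card {u // G.Adj u v}
noncomputable def outDeg (G : DirGraph V) (v : V) : ℕ := Nat.card {u // G.Adj v u}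

/-- A connecting point: a vertex shared by two distinct simple cycles. -/
def IsConnectingPoint (G : DirGraph V) (v : V) : Prop :=
  ∃ p q, G.IsSimpleCycle p ∧ G.IsSimpleCycle q ∧ ¬ CycleEquiv p q ∧ v ∈ p ∧ v ∈ q

/-- An expansion of digraphs. -/
structure IsExpansion (G' : DirGraph V') (G : DirGraph V) (φ : V' → V) : Prop where
  map_adj : ∀ ⦃x y⦄, G'.Adj x y → G.Adj (φ x) (φ y)
  vert_surj : Function.Surjective φ
  arc_surj : ∀ ⦃x y⦄, G.Adj x y → ∃ x' y', G'.Adj x' y' ∧ φ x' = x ∧ φ y' = y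
  lift : ∀ ⦃x y⦄, G.Adj x y → ∀ y', φ y' = y → ∃! x', G'.Adj x' y' ∧ φ x' = x

/-- A doubly bidirectionally connected pair. -/
def Dbcp (G : DirGraph V) (p q : V) : Prop :=
  p ≠ q ∧
  (∃ P Q, G.IsSimplePathFromTo P p q ∧ G.IsSimplePathFromTo Q p q ∧
    preterminal P ≠ preterminal Q) ∧
  (∃ P Q, G.IsSimplePathFromTo P q p ∧ G.IsSimplePathFromTo Q q p ∧
    preterminal P ≠ preterminal Q)

/-- Subgraph of a digraph: a vertex subset together with a subrelation of arcs
supported on it. -/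
structure Subgraph (G : DirGraph V) where
  verts : Set V
  Adj : V → V → Prop
  adj_sub : ∀ ⦃x y⦄, Adj x y → G.Adj x y
  mem_left : ∀ ⦃x y⦄, Adj x y → x ∈ verts
  mem_right : ∀ ⦃x y⦄, Adj x y → y ∈ verts

def Subgraph.toDirGraph {G : DirGraph V} (H : Subgraph G) : DirGraph V :=
  ⟨H.Adj, fun v h => G.loopless v (H.adj_sub h)⟩

/-- A sub-cactus digraph: a nonempty subgraph that is strongly connected (on
its vertex set) and in which each arc lies in exactly one simple cycle. -/
def Subgraph.IsCactus {G : DirGraph V} (H : Subgraph G) : Prop :=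
  H.verts.Nonempty ∧
  (∀ x ∈ H.verts, ∀ y ∈ H.verts, ∃ p, H.toDirGraph.IsWalkFromTo p x y) ∧
  H.toDirGraph.CactusArcCond

def Subgraph.inter {G : DirGraph V} (H K : Subgraph G) : Subgraph G where
  verts := H.verts ∩ K.verts
  Adj x y := H.Adj x y ∧ K.Adj x y
  adj_sub := fun _ _ h => H.adj_sub h.1
  mem_left := fun _ _ h => ⟨H.mem_left h.1, K.mem_left h.2⟩
  mem_right := fun _ _ h => ⟨H.mem_right h.1, K.mem_right h.2⟩

def Subgraph.le {G : DirGraph V} (H K : Subgraph G) : Prop :=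
  H.verts ⊆ K.verts ∧ ∀ ⦃x y⦄, H.Adj x y → K.Adj x y

/-- The single-vertex subgraph. -/
def singleVert (G : DirGraph V) (v : V) : Subgraph G where
  verts := {v}
  Adj _ _ := False
  adj_sub := by intro _ _ h; exact h.elim
  mem_left := by intro _ _ h; exact h.elim
  mem_right := by intro _ _ h; exact h.elim

/-- The intersection of all sub-cactus digraphs of `G` containing `W`. -/
def CsubOf (G : DirGraph V) (W : Set V) : Subgraph G where
  verts := {x | ∀ H : Subgraph G, H.IsCactus → W ⊆ H.verts → x ∈ H.verts}
  Adj x y := G.Adj x y ∧ ∀ H : Subgraph G, H.IsCactus → W ⊆ H.verts → H.Adj x y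
  adj_sub := fun _ _ h => h.1
  mem_left := fun _ _ h H hH hW => H.mem_left (h.2 H hH hW)
  mem_right := fun _ _ h H hH hW => H.mem_right (h.2 H hH hW)

open Classical in
/-- `C G r v`: the minimum sub-cactus digraph containing `{r, v}` (and the
single vertex `{r}` when `v = r`). -/
noncomputable def C (G : DirGraph V) (r v : V) : Subgraph G :=
  if v = r then singleVert G r else CsubOf G {r, v}

/-- The preorder on vertices of the rooted cactus digraph `(G, r)`:
`v ≼ w ↔ C(v) ⊆ C(w)`. -/
def pre (G : DirGraph V) (r v w : V) : Prop :=
  Subgraph.le (C G r v) (C G r w)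

theorem arcs_cons_cons (a b : V) (l : List V) :
    arcs (a :: b :: l) = (a, b) :: arcs (b :: l) := by
  simp [arcs]

/-- adjacent-pair characterization of arcs -/
theorem mem_arcs_iff {a b : V} {l : List V} :
    (a, b) ∈ arcs l ↔ ∃ l1 l2, l = l1 ++ a :: b :: l2 := by
  induction l with
  | nil => simp [arcs]
  | cons h t ih =>
    cases t with
    | nil =>
      simp only [arcs]
      simp only [List.tail_cons, List.zip_nil_right, List.not_mem_nil, false_iff]
      rintro ⟨l1, l2, hl⟩
      have := congrArg List.length hl
      simp at this
      omega
    | cons h2 t2 =>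
      rw [arcs_cons_cons, List.mem_cons, ih]
      constructor
      · rintro (heq | ⟨l1, l2, hl⟩)
        · obtain ⟨rfl, rfl⟩ := Prod.mk.injEq .. ▸ heq
          exact ⟨[], t2, by simp⟩
        · exact ⟨h :: l1, l2, by simp [hl]⟩
      · rintro ⟨l1, l2, hl⟩
        cases l1 with
        | nil =>
          simp at hl
          obtain ⟨rfl, rfl, rfl⟩ := hl
          left; rfl
        | cons x xs =>
          simp at hl
          right; exact ⟨xs, l2, hl.2⟩

theorem arcs_infix {l₁ l₂ : List V} (h : l₁ <:+: l₂) {a : V × V} (ha : a ∈ arcs l₁) :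
    a ∈ arcs l₂ := by
  obtain ⟨a1, a2⟩ := a
  obtain ⟨s, t, rfl⟩ := h
  obtain ⟨m1, m2, rfl⟩ := mem_arcs_iff.1 ha
  exact mem_arcs_iff.2 ⟨s ++ m1, m2 ++ t, by simp⟩

theorem mem_of_mem_arcs {a b : V} {l : List V} (h : (a, b) ∈ arcs l) : a ∈ l ∧ b ∈ l := by
  obtain ⟨l1, l2, rfl⟩ := mem_arcs_iff.1 h
  constructor <;> simp

theorem isWalk_iff {G : DirGraph V} {p : List V} :
    G.IsWalk p ↔ p ≠ [] ∧ ∀ a b : V, (a, b) ∈ arcs p → G.Adj a b := by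
  induction p with
  | nil => simp [IsWalk]
  | cons h t ih =>
    cases t with
    | nil => simp [IsWalk, arcs]
    | cons h2 t2 =>
      simp only [IsWalk, ih]
      constructor
      · rintro ⟨hadj, -, hall⟩
        refine ⟨by simp, fun a b hm => ?_⟩
        rcases mem_arcs_iff.1 hm with ⟨l1, l2, hl⟩
        cases l1 with
        | nil => simp at hl; obtain ⟨rfl, rfl, -⟩ := hl; exact hadj
        | cons x xs =>
          simp at hl
          exact hall a b (mem_arcs_iff.2 ⟨xs, l2, hl.2⟩)
      · rintro ⟨-, hall⟩
        refine ⟨hall h h2 (mem_arcs_iff.2 ⟨[], t2, rfl⟩), by simp, fun a b hm => ?_⟩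
        exact hall a b (arcs_infix ⟨[h], [], by simp⟩ hm)

theorem arcs_append_subset {X Y : List V} (hX : X ≠ []) (hY : Y ≠ []) {a : V × V}
    (h : a ∈ arcs (X ++ Y)) :
    a ∈ arcs X ∨ a ∈ arcs Y ∨ a = (X.getLast hX, Y.head hY) := by
  induction X with
  | nil => exact absurd rfl hX
  | cons x xs ih =>
    cases xs with
    | nil =>
      obtain ⟨y0, ys⟩ := List.exists_cons_of_ne_nil hY
      obtain ⟨ys, rfl⟩ := ys
      rw [List.singleton_append, arcs_cons_cons, List.mem_cons] at h
      rcases h with h | h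
      · right; right; simpa using h
      · right; left; exact h
    | cons x2 xs2 =>
      rw [List.cons_append, List.cons_append, arcs_cons_cons, List.mem_cons] at h
      rcases h with h | h
      · left; rw [arcs_cons_cons, h]; exact List.mem_cons_self
      · rw [← List.cons_append] at h
        rcases ih (by simp) h with h' | h' | h'
        · left; exact arcs_infix ⟨[x], [], by simp⟩ h'
        · right; left; exact h'
        · right; right; rw [h', List.getLast_cons (by simp : (x2::xs2 : List V) ≠ [])]



theorem isWalkFromTo_ne_nil {G : DirGraph V} {p : List V} {x y : V}
    (h : G.IsWalkFromTo p x y) : p ≠ [] := by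
  intro h0; rw [h0] at h; exact (by simpa using h.2.1)

theorem isWalkFromTo_single {G : DirGraph V} (x : V) : G.IsWalkFromTo [x] x x := by
  exact ⟨trivial, rfl, rfl⟩

theorem head_mem_walk {G : DirGraph V} {p : List V} {x y : V} (h : G.IsWalkFromTo p x y) :
    x ∈ p := by
  cases p with
  | nil => exact absurd rfl (isWalkFromTo_ne_nil h)
  | cons a t =>
    have : a = x := by have := h.2.1; simpa using this
    rw [← this]; exact List.mem_cons_self

theorem last_mem_walk {G : DirGraph V} {p : List V} {x y : V} (h : G.IsWalkFromTo p x y) :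
    y ∈ p := by
  have hne := isWalkFromTo_ne_nil h
  have := h.2.2
  rw [List.getLast?_eq_getLast hne] at this
  have : y = p.getLast hne := by injection this.symm
  rw [this]; exact List.getLast_mem hne

/-- gluing two walks -/
theorem walk_glue {G : DirGraph V} {p q : List V} {x y z : V}
    (hp : G.IsWalkFromTo p x y) (hq : G.IsWalkFromTo q y z) :
    ∃ w, G.IsWalkFromTo w x z ∧ ∀ a ∈ arcs w, a ∈ arcs p ∨ a ∈ arcs q := by
  have hpne := isWalkFromTo_ne_nil hp
  have hqne := isWalkFromTo_ne_nil hq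
  rcases Classical.em (q.tail = []) with htl | htl
  · -- q = [y], z = y
    obtain ⟨q0, qs⟩ := List.exists_cons_of_ne_nil hqne
    obtain ⟨qs, rfl⟩ := qs
    simp at htl
    subst htl
    have hq0 : q0 = y := by have := hq.2.1; simpa using this
    have hz : y = z := by have := hq.2.2; subst hq0; simpa using this
    exact ⟨p, by rw [← hz]; exact hp, fun a ha => Or.inl ha⟩
  · refine ⟨p ++ q.tail, ⟨?_, ?_, ?_⟩, ?_⟩
    · rw [isWalk_iff]
      refine ⟨by simp [hpne], fun a b hab => ?_⟩
      rcases arcs_append_subset hpne htl hab with h' | h' | h'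
      · exact (isWalk_iff.1 hp.1).2 a b h'
      · exact (isWalk_iff.1 hq.1).2 a b (arcs_infix (List.IsSuffix.isInfix ⟨[q.head hqne],
          by simp⟩) h')
      · -- junction: (getLast p, head q.tail) ; getLast p = y, q = y :: q.tail
        have ha : a = p.getLast hpne := congrArg Prod.fst h'
        have hb : b = q.tail.head htl := congrArg Prod.snd h'
        have hy : p.getLast hpne = y := by
          have := hp.2.2; rw [List.getLast?_eq_getLast hpne] at this; injection this
        have hcons : q = y :: q.tail := (List.cons_head?_tail hq.2.1).symm
        obtain ⟨t0, ts, hts⟩ := List.exists_cons_of_ne_nil htl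
        have e1 : q.tail.head? = some (q.tail.head htl) := List.head?_eq_head htl
        have e2 : q.tail.head? = some t0 := by rw [hts]; rfl
        have hw : q.tail.head htl = t0 := by injection e1.symm.trans e2
        rw [ha, hb, hy, hw]
        exact (isWalk_iff.1 hq.1).2 _ _ (mem_arcs_iff.2 ⟨[], ts, by rw [hcons, hts]; rfl⟩)
    · rw [List.head?_append_of_ne_nil _ hpne]; exact hp.2.1
    · rw [List.getLast?_append_of_ne_nil _ htl]
      have hq' : q = [q.head hqne] ++ q.tail := by
        simpa using (List.cons_head?_tail (List.head?_eq_head hqne)).symm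
      have h2 := hq.2.2
      rw [hq', List.getLast?_append_of_ne_nil _ htl] at h2
      exact h2
    · intro a ha
      rcases arcs_append_subset hpne htl ha with h' | h' | h'
      · exact Or.inl h'
      · exact Or.inr (arcs_infix (List.IsSuffix.isInfix ⟨[q.head hqne], by simp⟩) h')
      · obtain ⟨t0, ts, hts⟩ := List.exists_cons_of_ne_nil htl
        have hy : p.getLast hpne = y := by
          have := hp.2.2; rw [List.getLast?_eq_getLast hpne] at this; injection this
        have hcons : q = y :: q.tail := (List.cons_head?_tail hq.2.1).symm
        have e1 : q.tail.head? = some (q.tail.head htl) := List.head?_eq_head htl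
        have e2 : q.tail.head? = some t0 := by rw [hts]; rfl
        have hw : q.tail.head htl = t0 := by injection e1.symm.trans e2
        right
        rw [h', hy, hw]
        exact mem_arcs_iff.2 ⟨[], ts, by rw [hcons, hts]; rfl⟩

theorem getLast?_mem' {l : List V} {a : V} (h : l.getLast? = some a) : a ∈ l := by
  cases l with
  | nil => simp at h
  | cons b t =>
    have hne : (b :: t : List V) ≠ [] := by simp
    rw [List.getLast?_eq_getLast hne] at h
    have : a = (b :: t).getLast hne := by injection h.symm
    rw [this]; exact List.getLast_mem hne

theorem not_arc_from_last {w : List V} (hnd : w.Nodup) {x : V} (hx : w.getLast? = some x)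
    (z : V) : (x, z) ∉ arcs w := by
  intro h
  obtain ⟨l1, l2, rfl⟩ := mem_arcs_iff.1 h
  rw [List.getLast?_append_cons] at hx
  have hx2 : (z :: l2).getLast? = some x := by
    have : (x :: z :: l2 : List V) = [x] ++ z :: l2 := rfl
    rw [this, List.getLast?_append_of_ne_nil _ (by simp)] at hx
    exact hx
  have hmem : x ∈ z :: l2 := getLast?_mem' hx2
  have hsub : (x :: z :: l2 : List V).Nodup :=
    (List.sublist_append_right l1 _).nodup hnd
  exact (List.nodup_cons.1 hsub).1 hmem

theorem walk_split {G : DirGraph V} {p : List V} {x y : V} (h : G.IsWalkFromTo p x y)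
    {z : V} (hz : z ∈ p) :
    (∃ w, G.IsWalkFromTo w x z ∧ ∀ a ∈ arcs w, a ∈ arcs p) ∧
    (∃ w, G.IsWalkFromTo w z y ∧ ∀ a ∈ arcs w, a ∈ arcs p) := by
  obtain ⟨l1, l2, rfl⟩ := List.append_of_mem hz
  constructor
  · refine ⟨l1 ++ [z], ⟨?_, ?_, ?_⟩, fun a ha => arcs_infix ⟨[], l2, by simp⟩ ha⟩
    · rw [isWalk_iff]
      exact ⟨by simp, fun a b hab => (isWalk_iff.1 h.1).2 a b (arcs_infix ⟨[], l2, by simp⟩ hab)⟩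
    · have : (l1 ++ [z]).head? = (l1 ++ z :: l2).head? := by cases l1 <;> rfl
      rw [this]; exact h.2.1
    · rw [List.getLast?_append_cons]; rfl
  · refine ⟨z :: l2, ⟨?_, rfl, ?_⟩, fun a ha => arcs_infix ⟨l1, [], by simp⟩ ha⟩
    · rw [isWalk_iff]
      exact ⟨by simp, fun a b hab => (isWalk_iff.1 h.1).2 a b (arcs_infix ⟨l1, [], by simp⟩ hab)⟩
    · rw [← h.2.2, List.getLast?_append_cons]

theorem exists_dup_split {l : List V} (h : ¬ l.Nodup) :
    ∃ z l1 l2 l3, l = l1 ++ z :: (l2 ++ z :: l3) := by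
  induction l with
  | nil => simp at h
  | cons a t ih =>
    by_cases ha : a ∈ t
    · obtain ⟨s, u, rfl⟩ := List.append_of_mem ha
      exact ⟨a, [], s, u, by simp⟩
    · have : ¬ t.Nodup := fun hn => h (List.nodup_cons.2 ⟨ha, hn⟩)
      obtain ⟨z, l1, l2, l3, rfl⟩ := ih this
      exact ⟨z, a :: l1, l2, l3, rfl⟩

theorem walk_toPath {G : DirGraph V} : ∀ (n : ℕ) (p : List V) (x y : V), p.length ≤ n →
    G.IsWalkFromTo p x y →
    ∃ q, G.IsWalkFromTo q x y ∧ q.Nodup ∧ ∀ a ∈ arcs q, a ∈ arcs p := by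
  intro n
  induction n with
  | zero => intro p x y hl h; cases p with
      | nil => exact absurd rfl (isWalkFromTo_ne_nil h)
      | cons a t => simp at hl
  | succ n ih =>
    intro p x y hl h
    by_cases hnd : p.Nodup
    · exact ⟨p, h, hnd, fun a ha => ha⟩
    · obtain ⟨z, l1, l2, l3, rfl⟩ := exists_dup_split hnd
      set p := l1 ++ z :: (l2 ++ z :: l3) with hp
      have hsub : ∀ a ∈ arcs (l1 ++ z :: l3), a ∈ arcs p := by
        intro a ha
        rcases Classical.em (l1 = []) with rfl | hl1
        · exact arcs_infix (show (z :: l3) <:+: p from ⟨z :: l2, [], by simp [hp]⟩)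
            (by simpa using ha)
        · rcases arcs_append_subset hl1 (by simp : (z :: l3 : List V) ≠ []) ha with h' | h' | h'
          · exact arcs_infix ⟨[], z :: (l2 ++ z :: l3), by simp [hp]⟩ h'
          · exact arcs_infix ⟨l1 ++ z :: l2, [], by simp [hp]⟩ h'
          · obtain ⟨l1', c, rfl⟩ := (List.eq_nil_or_concat' l1).resolve_left hl1
            rw [h']
            have : (l1' ++ [c]).getLast hl1 = c := by
              simp [List.getLast_append]
            rw [this]
            exact mem_arcs_iff.2 ⟨l1', l2 ++ z :: l3, by simp [hp]⟩
      have hwalk' : G.IsWalkFromTo (l1 ++ z :: l3) x y := by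
        refine ⟨?_, ?_, ?_⟩
        · rw [isWalk_iff]
          exact ⟨by simp, fun a b hab => (isWalk_iff.1 h.1).2 a b (hsub _ hab)⟩
        · have : (l1 ++ z :: l3).head? = p.head? := by rw [hp]; cases l1 <;> rfl
          rw [this]; exact h.2.1
        · have : p.getLast? = (z :: l3).getLast? := by
            rw [hp, show l1 ++ z :: (l2 ++ z :: l3) = (l1 ++ z :: l2) ++ z :: l3 by simp,
              List.getLast?_append_cons]
          rw [List.getLast?_append_cons, ← this]; exact h.2.2
      have hlen : (l1 ++ z :: l3).length ≤ n := by
        have := hl; rw [hp] at this; simp at this ⊢; omega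
      obtain ⟨q, hq, hqnd, hqsub⟩ := ih _ x y hlen hwalk'
      exact ⟨q, hq, hqnd, fun a ha => hsub _ (hqsub _ ha)⟩

/-- canonical form of a simple cycle -/
theorem cycle_canon {G : DirGraph V} {S : List V} (hS : G.IsSimpleCycle S) :
    ∃ (h : V) (c' : List V), S = (h :: c') ++ [h] ∧ S.dropLast = h :: c' := by
  obtain ⟨hw, hlen, hcl, hnd⟩ := hS
  cases S with
  | nil => simp at hlen
  | cons a t =>
    have htne : t ≠ [] := by intro h0; rw [h0] at hlen; simp at hlen
    have hgl : t.getLast htne = a := by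
      have h1 : (a :: t).getLast? = some a := by
        rw [← hcl]; rfl
      rw [List.getLast?_eq_getLast (by simp : (a :: t : List V) ≠ [])] at h1
      have h2 : (a :: t).getLast (by simp) = t.getLast htne := List.getLast_cons htne
      rw [h2] at h1
      injection h1
    refine ⟨a, t.dropLast, ?_, ?_⟩
    · have : t = t.dropLast ++ [t.getLast htne] := (List.dropLast_append_getLast htne).symm
      rw [hgl] at this
      calc a :: t = a :: (t.dropLast ++ [a]) := by rw [← this]
        _ = (a :: t.dropLast) ++ [a] := rfl
    · rw [List.dropLast_cons_of_ne_nil htne]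

theorem mem_cycle_iff_mem_dropLast {G : DirGraph V} {S : List V} (hS : G.IsSimpleCycle S)
    {v : V} : v ∈ S ↔ v ∈ S.dropLast := by
  obtain ⟨h, c', hc, hd⟩ := cycle_canon hS
  rw [hd, hc]
  simp only [List.mem_append, List.mem_cons, List.mem_singleton, List.not_mem_nil, or_false]
  constructor
  · rintro ((rfl | hv) | rfl)
    · exact Or.inl rfl
    · exact Or.inr hv
    · exact Or.inl rfl
  · rintro (rfl | hv)
    · exact Or.inl (Or.inl rfl)
    · exact Or.inl (Or.inr hv)

/-- every vertex of a simple cycle has an outgoing arc on the cycle -/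
theorem cycle_out_arc {G : DirGraph V} {S : List V} (hS : G.IsSimpleCycle S) {v : V}
    (hv : v ∈ S) : ∃ w, (v, w) ∈ arcs S := by
  obtain ⟨h, c', hc, hd⟩ := cycle_canon hS
  have hvc : v ∈ h :: c' := by rw [← hd]; exact (mem_cycle_iff_mem_dropLast hS).1 hv
  obtain ⟨a, b, hab⟩ := List.append_of_mem hvc
  cases b with
  | nil => exact ⟨h, mem_arcs_iff.2 ⟨a, [], by rw [hc, hab]; simp⟩⟩
  | cons b0 bs => exact ⟨b0, mem_arcs_iff.2 ⟨a, bs ++ [h], by rw [hc, hab]; simp⟩⟩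

theorem along_cycle_aux {G : DirGraph V} {S : List V} (hSw : G.IsWalk S)
    (c : List V) (h : V) (hc : S = c ++ [h]) (hh : c.head? = some h) (hcnd : c.Nodup)
    {u v : V} (hu : u ∈ c) (hv : v ∈ c) (hvu : v ≠ u) :
    ∃ w, G.IsWalkFromTo w u v ∧ w.Nodup ∧ ∀ a ∈ arcs w, a ∈ arcs S := by
  have hcne : c ≠ [] := by intro h0; rw [h0] at hh; simp at hh
  have hcS : c <+: S := ⟨[h], hc.symm⟩
  obtain ⟨a, b, hab⟩ := List.append_of_mem hu
  -- the junction arc (getLast c, h) is an arc of S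
  have hjunc : (c.getLast hcne, h) ∈ arcs S := by
    obtain ⟨c1, d, hcd⟩ := (List.eq_nil_or_concat' c).resolve_left hcne
    have hgl : c.getLast hcne = d := by
      have g1 : c.getLast? = some (c.getLast hcne) := List.getLast?_eq_getLast hcne
      have g2 : c.getLast? = some d := by rw [hcd]; simp
      injection g1.symm.trans g2
    rw [hgl]
    exact mem_arcs_iff.2 ⟨c1, [], by rw [hc, hcd]; simp⟩
  -- rotated vertex list D (nodup, head u, same vertex set as c)
  have hperm : (u :: (b ++ a)).Perm c := by
    rw [hab]
    exact List.perm_append_comm (l₁ := u :: b) (l₂ := a)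
  have hDnd : (u :: (b ++ a)).Nodup := hperm.nodup_iff.2 hcnd
  have harcs_D : ∀ x ∈ arcs (u :: (b ++ a)), x ∈ arcs S := by
    intro x hx
    have hxd : x ∈ arcs ((u :: b) ++ a) := hx
    rcases Classical.em (a = []) with rfl | hane
    · simp only [List.append_nil] at hxd
      exact arcs_infix hcS.isInfix
        (arcs_infix (show (u :: b) <:+ c from ⟨[], by rw [hab]⟩).isInfix hxd)
    · rcases arcs_append_subset (by simp) hane hxd with h' | h' | h'
      · exact arcs_infix hcS.isInfix
          (arcs_infix (show (u :: b) <:+ c from ⟨a, by rw [hab]⟩).isInfix h')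
      · exact arcs_infix hcS.isInfix
          (arcs_infix (show a <+: c from ⟨u :: b, by rw [hab]⟩).isInfix h')
      · -- junction : (getLast (u::b), head a) = (getLast c, h)
        have e1 : (u :: b).getLast (by simp) = c.getLast hcne := by
          have g1 : (u :: b).getLast? = c.getLast? := by
            rw [hab, List.getLast?_append_cons]
          rw [List.getLast?_eq_getLast (by simp : (u :: b : List V) ≠ []), List.getLast?_eq_getLast hcne] at g1
          injection g1
        have e2 : a.head hane = h := by
          have g1 : a.head? = c.head? := by
            rw [hab]
            exact (List.head?_append_of_ne_nil _ hane).symm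
          rw [List.head?_eq_head hane, hh] at g1
          injection g1
        rw [h', e1, e2]
        exact hjunc
  have hvD : v ∈ u :: (b ++ a) := hperm.mem_iff.2 hv
  obtain ⟨d1, d2, hd12⟩ := List.append_of_mem hvD
  have hd1ne : d1 ≠ [] := by
    intro h0
    rw [h0] at hd12
    simp at hd12
    exact hvu hd12.1.symm
  have hpre : (d1 ++ [v]) <+: (u :: (b ++ a)) := ⟨d2, by rw [hd12]; simp⟩
  refine ⟨d1 ++ [v], ⟨?_, ?_, ?_⟩, ?_, ?_⟩
  · rw [isWalk_iff]
    refine ⟨by simp, fun p q hpq => (isWalk_iff.1 hSw).2 p q ?_⟩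
    exact harcs_D _ (arcs_infix hpre.isInfix hpq)
  · have : (d1 ++ [v]).head? = (u :: (b ++ a)).head? := by
      rw [hd12]; cases d1 with
      | nil => exact absurd rfl hd1ne
      | cons e es => rfl
    rw [this]; rfl
  · rw [List.getLast?_append_cons]; rfl
  · exact hpre.sublist.nodup hDnd
  · intro x hx
    exact harcs_D _ (arcs_infix hpre.isInfix hx)

/-- walking along a cycle between any two of its vertices, via a nodup path -/
theorem along_cycle {G : DirGraph V} {S : List V} (hS : G.IsSimpleCycle S) {u v : V}
    (hu : u ∈ S) (hv : v ∈ S) :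
    ∃ w, G.IsWalkFromTo w u v ∧ w.Nodup ∧ ∀ a ∈ arcs w, a ∈ arcs S := by
  rcases Classical.em (v = u) with rfl | hvu
  · exact ⟨[v], isWalkFromTo_single v, List.nodup_singleton v, by simp [arcs]⟩
  obtain ⟨h, c', hc, hd⟩ := cycle_canon hS
  have hcnd : (h :: c').Nodup := by rw [← hd]; exact hS.2.2.2
  have huc : u ∈ h :: c' := by rw [← hd]; exact (mem_cycle_iff_mem_dropLast hS).1 hu
  have hvc : v ∈ h :: c' := by rw [← hd]; exact (mem_cycle_iff_mem_dropLast hS).1 hv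
  exact along_cycle_aux hS.1 (h :: c') h hc rfl hcnd huc hvc hvu

theorem not_mem_dropLast_of_nodup {P : List V} (hnd : P.Nodup) {y : V}
    (hy : P.getLast? = some y) : y ∉ P.dropLast := by
  intro hmem
  cases P with
  | nil => simp at hy
  | cons a t =>
    have hne : (a :: t : List V) ≠ [] := by simp
    have hsplit : (a :: t).dropLast ++ [(a :: t).getLast hne] = a :: t :=
      List.dropLast_append_getLast hne
    rw [List.getLast?_eq_getLast hne] at hy
    have hyl : (a :: t).getLast hne = y := by injection hy
    rw [hyl] at hsplit
    rw [← hsplit] at hnd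
    have := List.disjoint_of_nodup_append hnd
    exact this hmem (by simp)

/-- the key structural lemma: a walk between two vertices of a simple cycle
avoiding all arcs of the cycle forces the endpoints to coincide -/
theorem cycle_no_escape {G : DirGraph V} (hG : G.CactusArcCond) {S : List V}
    (hS : G.IsSimpleCycle S) {x y : V} (hx : x ∈ S) (hy : y ∈ S) {q : List V}
    (hq : G.IsWalkFromTo q x y) (havoid : ∀ a ∈ arcs q, a ∉ arcs S) : x = y := by
  by_contra hxy
  obtain ⟨y2, hyarc⟩ := cycle_out_arc hS hy
  have hy2S : y2 ∈ S := (mem_of_mem_arcs hyarc).2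
  obtain ⟨w, hw, hwnd, hwsub⟩ := along_cycle hS hy2S hx
  obtain ⟨W, hW, hWsub⟩ := walk_glue hw hq
  obtain ⟨P, hP, hPnd, hPsub⟩ := walk_toPath W.length W y2 y le_rfl hW
  have hPne := isWalkFromTo_ne_nil hP
  obtain ⟨p0, P', rfl⟩ := List.exists_cons_of_ne_nil hPne
  have hp0 : p0 = y2 := by have := hP.2.1; simpa using this
  subst hp0
  have hAdjyp0 : G.Adj y p0 := (isWalk_iff.1 hS.1).2 _ _ hyarc
  have hQw : G.IsWalk (y :: p0 :: P') := ⟨hAdjyp0, hP.1⟩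
  have hQlast : (y :: p0 :: P').getLast? = some y := by
    have : (y :: p0 :: P' : List V) = [y] ++ (p0 :: P') := rfl
    rw [this, List.getLast?_append_of_ne_nil _ (by simp)]
    exact hP.2.2
  have hQcyc : G.IsSimpleCycle (y :: p0 :: P') := by
    refine ⟨hQw, by simp, by rw [hQlast]; rfl, ?_⟩
    rw [List.dropLast_cons_of_ne_nil (by simp)]
    rw [List.nodup_cons]
    exact ⟨not_mem_dropLast_of_nodup hPnd hP.2.2,
      List.Nodup.sublist (List.dropLast_sublist _) hPnd⟩
  have hQmem : (y, p0) ∈ arcs (y :: p0 :: P') := mem_arcs_iff.2 ⟨[], P', rfl⟩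
  have hequiv : CycleEquiv (y :: p0 :: P') S :=
    (hG y p0 hAdjyp0).2 _ S hQcyc hQmem hS hyarc
  obtain ⟨x2, hxarc⟩ := cycle_out_arc hS hx
  have hxQ : (x, x2) ∈ arcs (y :: p0 :: P') := (hequiv _).2 hxarc
  rw [arcs_cons_cons, List.mem_cons] at hxQ
  rcases hxQ with h' | h'
  · exact hxy (congrArg Prod.fst h')
  · rcases hWsub _ (hPsub _ h') with h'' | h''
    · exact not_arc_from_last hwnd hw.2.2 x2 h''
    · exact havoid _ h'' hxarc


/-! ### The component of the root avoiding the arcs of a cycle -/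

def avoidArcs (G : DirGraph V) (S : List V) : DirGraph V :=
  ⟨fun a b => G.Adj a b ∧ (a, b) ∉ arcs S, fun v h => G.loopless v h.1⟩

theorem walk_mono {G₁ G₂ : DirGraph V} (h : ∀ a b, G₁.Adj a b → G₂.Adj a b)
    {p : List V} (hp : G₁.IsWalk p) : G₂.IsWalk p := by
  rw [isWalk_iff] at hp ⊢
  exact ⟨hp.1, fun a b hab => h a b (hp.2 a b hab)⟩

theorem walkFromTo_mono {G₁ G₂ : DirGraph V} (h : ∀ a b, G₁.Adj a b → G₂.Adj a b)
    {p : List V} {x y : V} (hp : G₁.IsWalkFromTo p x y) : G₂.IsWalkFromTo p x y :=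
  ⟨walk_mono h hp.1, hp.2.1, hp.2.2⟩

def Kverts (G : DirGraph V) (r : V) (S : List V) : Set V :=
  {x | (∃ p, (avoidArcs G S).IsWalkFromTo p r x) ∧ ∃ p, (avoidArcs G S).IsWalkFromTo p x r}

theorem r_mem_Kverts (G : DirGraph V) (r : V) (S : List V) : r ∈ Kverts G r S :=
  ⟨⟨[r], isWalkFromTo_single r⟩, ⟨[r], isWalkFromTo_single r⟩⟩

theorem Kverts_closed_to {G : DirGraph V} {r : V} {S : List V} {x : V}
    (hx : x ∈ Kverts G r S) {p : List V} (hp : (avoidArcs G S).IsWalkFromTo p x r)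
    {z : V} (hz : z ∈ p) : z ∈ Kverts G r S := by
  obtain ⟨⟨w1, hw1⟩, -⟩ := hx
  obtain ⟨⟨q1, hq1, -⟩, ⟨q2, hq2, -⟩⟩ := walk_split hp hz
  obtain ⟨w, hw, -⟩ := walk_glue hw1 hq1
  exact ⟨⟨w, hw⟩, ⟨q2, hq2⟩⟩

theorem Kverts_closed_from {G : DirGraph V} {r : V} {S : List V} {y : V}
    (hy : y ∈ Kverts G r S) {p : List V} (hp : (avoidArcs G S).IsWalkFromTo p r y)
    {z : V} (hz : z ∈ p) : z ∈ Kverts G r S := by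
  obtain ⟨-, ⟨w2, hw2⟩⟩ := hy
  obtain ⟨⟨q1, hq1, -⟩, ⟨q2, hq2, -⟩⟩ := walk_split hp hz
  obtain ⟨w, hw, -⟩ := walk_glue hq2 hw2
  exact ⟨⟨q1, hq1⟩, ⟨w, hw⟩⟩

def Ksub (G : DirGraph V) (r : V) (S : List V) : Subgraph G where
  verts := Kverts G r S
  Adj a b := (avoidArcs G S).Adj a b ∧ a ∈ Kverts G r S ∧ b ∈ Kverts G r S
  adj_sub := fun _ _ h => h.1.1
  mem_left := fun _ _ h => h.2.1
  mem_right := fun _ _ h => h.2.2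

theorem Ksub_walk_of_avoid_walk {G : DirGraph V} {r : V} {S : List V} {p : List V}
    (hp : (avoidArcs G S).IsWalk p) (hverts : ∀ z ∈ p, z ∈ Kverts G r S) :
    (Ksub G r S).toDirGraph.IsWalk p := by
  rw [isWalk_iff] at hp ⊢
  refine ⟨hp.1, fun a b hab => ?_⟩
  obtain ⟨ha, hb⟩ := mem_of_mem_arcs hab
  exact ⟨hp.2 a b hab, hverts _ ha, hverts _ hb⟩

theorem Ksub_connected {G : DirGraph V} {r : V} {S : List V} {x y : V}
    (hx : x ∈ Kverts G r S) (hy : y ∈ Kverts G r S) :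
    ∃ p, (Ksub G r S).toDirGraph.IsWalkFromTo p x y := by
  obtain ⟨-, ⟨w1, hw1⟩⟩ := id hx
  obtain ⟨⟨w2, hw2⟩, -⟩ := id hy
  obtain ⟨w, hw, -⟩ := walk_glue hw1 hw2
  refine ⟨w, Ksub_walk_of_avoid_walk hw.1 (fun z hz => ?_), hw.2.1, hw.2.2⟩
  -- z on an avoid-walk from x to y, x, y ∈ Kverts
  obtain ⟨⟨q1, hq1, -⟩, ⟨q2, hq2, -⟩⟩ := walk_split hw hz
  obtain ⟨-, ⟨w2', hw2'⟩⟩ := id hy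
  obtain ⟨w3, hw3, -⟩ := walk_glue hq2 hw2'
  obtain ⟨⟨w1', hw1'⟩, -⟩ := id hx
  obtain ⟨w4, hw4, -⟩ := walk_glue hw1' hq1
  exact ⟨⟨w4, hw4⟩, ⟨w3, hw3⟩⟩

/-- a simple cycle of `G` through an arc of `Ksub` lies entirely in `Ksub` -/
theorem cycle_in_Ksub {G : DirGraph V} (hG : G.CactusArcCond) {r : V} {S : List V}
    (hS : G.IsSimpleCycle S) {a b : V} (hab : (Ksub G r S).Adj a b) {p : List V}
    (hp : G.IsSimpleCycle p) (hmem : (a, b) ∈ arcs p) :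
    (Ksub G r S).toDirGraph.IsSimpleCycle p := by
  obtain ⟨⟨hGab, habS⟩, haK, hbK⟩ := hab
  -- no arc of p is an arc of S
  have harc : ∀ c d : V, (c, d) ∈ arcs p → (c, d) ∉ arcs S := by
    intro c d hcd hcdS
    have hadj : G.Adj c d := (isWalk_iff.1 hp.1).2 c d hcd
    have hequiv : CycleEquiv p S := (hG c d hadj).2 p S hp hcd hS hcdS
    exact habS ((hequiv (a, b)).1 hmem)
  -- any walk along `p` is an avoid-walk
  have hto_avoid : ∀ {q : List V} {u v : V}, G.IsWalkFromTo q u v →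
      (∀ x ∈ arcs q, x ∈ arcs p) → (avoidArcs G S).IsWalkFromTo q u v := by
    intro q u v hq hsub
    refine ⟨?_, hq.2.1, hq.2.2⟩
    rw [isWalk_iff]
    refine ⟨isWalkFromTo_ne_nil hq, fun c d hcd => ?_⟩
    exact ⟨(isWalk_iff.1 hq.1).2 c d hcd, harc c d (hsub _ hcd)⟩
  obtain ⟨ha, hb⟩ := mem_of_mem_arcs hmem
  have hverts : ∀ z ∈ p, z ∈ Kverts G r S := by
    intro z hz
    obtain ⟨q1, hq1, -, hq1sub⟩ := along_cycle hp hz ha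
    obtain ⟨q2, hq2, -, hq2sub⟩ := along_cycle hp hb hz
    obtain ⟨-, ⟨wa, hwa⟩⟩ := id haK
    obtain ⟨⟨wb, hwb⟩, -⟩ := id hbK
    obtain ⟨w1, hw1, -⟩ := walk_glue (hto_avoid hq1 hq1sub) hwa
    obtain ⟨w2, hw2, -⟩ := walk_glue hwb (hto_avoid hq2 hq2sub)
    exact ⟨⟨w2, hw2⟩, ⟨w1, hw1⟩⟩
  refine ⟨?_, hp.2.1, hp.2.2.1, hp.2.2.2⟩
  refine Ksub_walk_of_avoid_walk ?_ hverts
  rw [isWalk_iff]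
  refine ⟨(isWalk_iff.1 hp.1).1, fun c d hcd => ?_⟩
  exact ⟨(isWalk_iff.1 hp.1).2 c d hcd, harc c d hcd⟩

theorem Ksub_isCactus {G : DirGraph V} (hG : G.IsCactus) (r : V) {S : List V}
    (hS : G.IsSimpleCycle S) : (Ksub G r S).IsCactus := by
  refine ⟨⟨r, r_mem_Kverts G r S⟩, fun x hx y hy => Ksub_connected hx hy, ?_⟩
  intro x y hxy
  constructor
  · obtain ⟨q, hq, hqmem⟩ := (hG.2 x y hxy.1.1).1
    exact ⟨q, cycle_in_Ksub hG.2 hS hxy hq hqmem, hqmem⟩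
  · intro p q hp hpm hq hqm
    have hsub : ∀ a b, (Ksub G r S).toDirGraph.Adj a b → G.Adj a b := fun a b h => h.1.1
    exact (hG.2 x y hxy.1.1).2 p q
      ⟨walk_mono hsub hp.1, hp.2.1, hp.2.2.1, hp.2.2.2⟩ hpm
      ⟨walk_mono hsub hq.1, hq.2.1, hq.2.2.1, hq.2.2.2⟩ hqm

theorem avoid_walk_avoids {G : DirGraph V} {S : List V} {q : List V} {u v : V}
    (hq : (avoidArcs G S).IsWalkFromTo q u v) : ∀ a ∈ arcs q, a ∉ arcs S := by
  rintro ⟨a, b⟩ hab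
  exact ((isWalk_iff.1 hq.1).2 a b hab).2

/-- two vertices of `S` in the root component must coincide -/
theorem Kverts_inter_unique {G : DirGraph V} (hGc : G.CactusArcCond) {S : List V}
    (hS : G.IsSimpleCycle S) {r t1 t2 : V} (h1S : t1 ∈ S) (h1K : t1 ∈ Kverts G r S)
    (h2S : t2 ∈ S) (h2K : t2 ∈ Kverts G r S) : t1 = t2 := by
  obtain ⟨-, ⟨w1, hw1⟩⟩ := id h1K
  obtain ⟨⟨w2, hw2⟩, -⟩ := id h2K
  obtain ⟨w, hw, hwsub⟩ := walk_glue hw1 hw2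
  have hsub : ∀ a b, (avoidArcs G S).Adj a b → G.Adj a b := fun a b h => h.1
  refine cycle_no_escape hGc hS h1S h2S (walkFromTo_mono hsub hw) ?_
  intro a ha
  rcases hwsub a ha with h' | h'
  · exact avoid_walk_avoids hw1 a h'
  · exact avoid_walk_avoids hw2 a h'

theorem first_hit {G : DirGraph V} {S : List V} :
    ∀ (p : List V) (x y : V), G.IsWalkFromTo p x y → y ∈ S →
    ∃ z ∈ S, ∃ q, (avoidArcs G S).IsWalkFromTo q x z := by
  intro p
  induction p with
  | nil => intro x y h; exact absurd rfl (isWalkFromTo_ne_nil h)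
  | cons a t ih =>
    intro x y h hy
    have hax : a = x := by have := h.2.1; simpa using this
    subst hax
    by_cases haS : a ∈ S
    · exact ⟨a, haS, [a], isWalkFromTo_single a⟩
    · cases t with
      | nil =>
        have : y = a := by have := h.2.2; simpa using this.symm
        exact absurd (this ▸ hy) haS
      | cons b t' =>
        have hwt : G.IsWalkFromTo (b :: t') b y := ⟨h.1.2, rfl, h.2.2⟩
        obtain ⟨z, hzS, q, hq⟩ := ih b y hwt hy
        have hadj : (avoidArcs G S).Adj a b := by
          refine ⟨h.1.1, fun hc => haS (mem_of_mem_arcs hc).1⟩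
        have hqne := isWalkFromTo_ne_nil hq
        obtain ⟨q0, q', rfl⟩ := List.exists_cons_of_ne_nil hqne
        have hq0 : q0 = b := by have := hq.2.1; simpa using this
        refine ⟨z, hzS, a :: q0 :: q', ⟨⟨by rw [hq0]; exact hadj, hq.1⟩, rfl, ?_⟩⟩
        rw [List.getLast?_cons_cons]
        exact hq.2.2

theorem last_hit {G : DirGraph V} {S : List V} :
    ∀ (p : List V) (x y : V), G.IsWalkFromTo p x y →
    (∃ z ∈ S, ∃ q, (avoidArcs G S).IsWalkFromTo q z y) ∨ (∀ v ∈ p, v ∉ S) := by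
  intro p
  induction p with
  | nil => intro x y h; exact absurd rfl (isWalkFromTo_ne_nil h)
  | cons a t ih =>
    intro x y h
    have hax : a = x := by have := h.2.1; simpa using this
    subst hax
    cases t with
    | nil =>
      have hya : y = a := by have := h.2.2; simpa using this.symm
      by_cases haS : a ∈ S
      · exact Or.inl ⟨a, haS, [a], by rw [hya]; exact isWalkFromTo_single a⟩
      · exact Or.inr (by simpa using haS)
    | cons b t' =>
      have hwt : G.IsWalkFromTo (b :: t') b y := ⟨h.1.2, rfl, h.2.2⟩
      rcases ih b y hwt with hleft | hright
      · exact Or.inl hleft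
      · -- no vertex of b :: t' lies on S ; the tail is an avoid walk
        have htail : (avoidArcs G S).IsWalkFromTo (b :: t') b y := by
          refine ⟨?_, rfl, h.2.2⟩
          rw [isWalk_iff]
          refine ⟨by simp, fun c d hcd => ?_⟩
          refine ⟨(isWalk_iff.1 hwt.1).2 c d hcd, fun hc => ?_⟩
          exact hright c (mem_of_mem_arcs hcd).1 (mem_of_mem_arcs hc).1
        by_cases haS : a ∈ S
        · refine Or.inl ⟨a, haS, a :: b :: t', ⟨?_, rfl, by have := h.2.2; simpa using this⟩⟩
          refine ⟨⟨h.1.1, fun hc => ?_⟩, htail.1⟩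
          exact hright b (by simp) (mem_of_mem_arcs hc).2
        · refine Or.inr ?_
          intro v hv
          rcases List.mem_cons.1 hv with rfl | hv
          · exact haS
          · exact hright v hv

/-- existence of a vertex of `S` in the root component -/
theorem exists_Kverts_inter {G : DirGraph V} (hG : G.IsCactus) {S : List V} (r : V)
    (hS : G.IsSimpleCycle S) : ∃ t, t ∈ S ∧ t ∈ Kverts G r S := by
  have hSne : S ≠ [] := by
    intro h0; rw [h0] at hS; exact absurd hS.2.1 (by simp)
  obtain ⟨p1, hp1⟩ := hG.1 r (S.head hSne)
  obtain ⟨z, hzS, q1, hq1⟩ := first_hit p1 r (S.head hSne) hp1 (List.head_mem hSne)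
  obtain ⟨p2, hp2⟩ := hG.1 z r
  rcases last_hit p2 z r hp2 with ⟨u, huS, q2, hq2⟩ | hnone
  · -- u → r and r → z avoid walks; glue and apply no-escape
    obtain ⟨w, hw, hwsub⟩ := walk_glue hq2 hq1
    have hsub : ∀ a b, (avoidArcs G S).Adj a b → G.Adj a b := fun a b h => h.1
    have huz : u = z := by
      refine cycle_no_escape hG.2 hS huS hzS (walkFromTo_mono hsub hw) ?_
      intro a ha
      rcases hwsub a ha with h' | h'
      · exact avoid_walk_avoids hq2 a h'
      · exact avoid_walk_avoids hq1 a h'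
    exact ⟨z, hzS, ⟨q1, hq1⟩, ⟨q2, by rw [← huz]; exact hq2⟩⟩
  · exact absurd hzS (hnone z (head_mem_walk hp2))

/-! ### Sub-cactus absorption and the preorder -/

theorem cactus_absorb {G : DirGraph V} (hGc : G.CactusArcCond) {S : List V}
    (hS : G.IsSimpleCycle S) {H : Subgraph G} (hH : H.IsCactus) {x y : V}
    (hxy : H.Adj x y) (hmem : (x, y) ∈ arcs S) :
    (∀ a b : V, (a, b) ∈ arcs S → H.Adj a b) ∧ (∀ z ∈ S, z ∈ H.verts) := by
  obtain ⟨p, hp, hpm⟩ := (hH.2.2 x y hxy).1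
  have hsub : ∀ a b, H.toDirGraph.Adj a b → G.Adj a b := fun a b h => H.adj_sub h
  have hpG : G.IsSimpleCycle p := ⟨walk_mono hsub hp.1, hp.2.1, hp.2.2.1, hp.2.2.2⟩
  have hequiv : CycleEquiv p S := (hGc x y (H.adj_sub hxy)).2 p S hpG hpm hS hmem
  have harcs : ∀ a b : V, (a, b) ∈ arcs S → H.Adj a b := fun a b hab =>
    (isWalk_iff.1 hp.1).2 a b ((hequiv (a, b)).2 hab)
  refine ⟨harcs, fun z hz => ?_⟩
  obtain ⟨w, hw⟩ := cycle_out_arc hS hz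
  exact H.mem_left (harcs z w hw)

theorem subcactus_in_Kverts {G : DirGraph V} {S : List V} {r : V} {H : Subgraph G}
    (hH : H.IsCactus) (hr : r ∈ H.verts)
    (havoid : ∀ a b : V, H.Adj a b → (a, b) ∉ arcs S) {v : V} (hv : v ∈ H.verts) :
    v ∈ Kverts G r S := by
  obtain ⟨p1, hp1⟩ := hH.2.1 r hr v hv
  obtain ⟨p2, hp2⟩ := hH.2.1 v hv r hr
  have hsub : ∀ a b, H.toDirGraph.Adj a b → (avoidArcs G S).Adj a b :=
    fun a b h => ⟨H.adj_sub h, havoid a b h⟩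
  exact ⟨⟨p1, walkFromTo_mono hsub hp1⟩, ⟨p2, walkFromTo_mono hsub hp2⟩⟩

/-- every sub-cactus containing `r` and a non-minimal vertex of `S` absorbs all of `S` -/
theorem forced_absorb {G : DirGraph V} (hG : G.IsCactus) {S : List V}
    (hS : G.IsSimpleCycle S) {r t v : V} (htS : t ∈ S) (htK : t ∈ Kverts G r S)
    (hvS : v ∈ S) (hvt : v ≠ t) {H : Subgraph G} (hH : H.IsCactus)
    (hr : r ∈ H.verts) (hv : v ∈ H.verts) :
    (∀ a b : V, (a, b) ∈ arcs S → H.Adj a b) ∧ (∀ z ∈ S, z ∈ H.verts) := by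
  by_cases hex : ∃ a b : V, H.Adj a b ∧ (a, b) ∈ arcs S
  · obtain ⟨a, b, h1, h2⟩ := hex
    exact cactus_absorb hG.2 hS hH h1 h2
  · push_neg at hex
    have hvK := subcactus_in_Kverts hH hr hex hv
    exact absurd (Kverts_inter_unique hG.2 hS hvS hvK htS htK) hvt

theorem C_eq_of_ne {G : DirGraph V} {r v : V} (h : v ≠ r) :
    C G r v = CsubOf G {r, v} := by simp [C, h]

theorem C_eq_self {G : DirGraph V} {r : V} : C G r r = singleVert G r := by simp [C]

theorem r_mem_C {G : DirGraph V} (r v : V) : r ∈ (C G r v).verts := by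
  by_cases h : v = r
  · subst h; rw [C_eq_self]; exact rfl
  · rw [C_eq_of_ne h]
    exact fun H hH hW => hW (Set.mem_insert _ _)

theorem self_mem_C {G : DirGraph V} (r v : V) : v ∈ (C G r v).verts := by
  by_cases h : v = r
  · subst h; rw [C_eq_self]; exact rfl
  · rw [C_eq_of_ne h]
    exact fun H hH hW => hW (Set.mem_insert_of_mem _ rfl)

theorem pre_refl {G : DirGraph V} (r v : V) : pre G r v v :=
  ⟨Set.Subset.rfl, fun _ _ h => h⟩

theorem pre_of_forced {G : DirGraph V} {r v w : V} (hw : w ≠ r)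
    (hv_in : ∀ H : Subgraph G, H.IsCactus → ({r, w} : Set V) ⊆ H.verts → v ∈ H.verts) :
    pre G r v w := by
  rw [pre, C_eq_of_ne hw]
  by_cases hvr : v = r
  · subst hvr
    rw [C_eq_self]
    constructor
    · intro x hx
      have hx' : x = v := hx
      subst hx'
      exact fun H hH hW => hW (Set.mem_insert _ _)
    · intro a b h
      exact h.elim
  · rw [C_eq_of_ne hvr]
    constructor
    · intro x hx
      intro H hH hW
      refine hx H hH ?_
      refine Set.insert_subset_iff.2 ⟨hW (Set.mem_insert _ _), Set.singleton_subset_iff.2 ?_⟩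
      exact hv_in H hH hW
    · intro a b hab
      refine ⟨hab.1, fun H hH hW => ?_⟩
      refine hab.2 H hH ?_
      refine Set.insert_subset_iff.2 ⟨hW (Set.mem_insert _ _), Set.singleton_subset_iff.2 ?_⟩
      exact hv_in H hH hW

end DirGraph

open DirGraph in
/-- A simple cycle `S` of a rooted cactus digraph has a strongly minimum
vertex `v_S` (equal to `r` if `r ∈ S`, and a connecting point, the nearest to
`r`, otherwise), and all other vertices of `S` are equivalent. -/
theorem cycle_has_strong_minimum {V : Type} (G : DirGraph V) (r : V)
    (hG : G.IsCactus) (S : List V) (hS : G.IsSimpleCycle S) :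
    ∃ vS ∈ S,
      (∀ w ∈ S, w ≠ vS → pre G r vS w ∧ ¬ pre G r w vS) ∧
      (∀ v ∈ S, ∀ w ∈ S, v ≠ vS → w ≠ vS → pre G r v w ∧ pre G r w v) ∧
      (r ∈ S → vS = r) ∧
      (r ∉ S → G.IsConnectingPoint vS ∧
        ∀ c ∈ S, G.IsConnectingPoint c → pre G r vS c) := by
  classical
  obtain ⟨t, htS, htK⟩ := exists_Kverts_inter hG r hS
  have hrt : r ∈ S → t = r := fun hrS =>
    Kverts_inter_unique hG.2 hS htS htK hrS (r_mem_Kverts G r S)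
  have hwr : ∀ w ∈ S, w ≠ t → w ≠ r := by
    intro w hwS hwt hweq
    subst hweq
    exact hwt (hrt hwS).symm
  have hforced : ∀ v ∈ S, v ≠ t → ∀ H : Subgraph G, H.IsCactus →
      ({r, v} : Set V) ⊆ H.verts → (∀ z ∈ S, z ∈ H.verts) :=
    fun v hvS hvt H hH hW =>
      (forced_absorb hG hS htS htK hvS hvt hH (hW (Set.mem_insert _ _))
        (hW (Set.mem_insert_of_mem _ rfl))).2
  have hpre_t : ∀ w ∈ S, w ≠ t → pre G r t w := fun w hwS hwt =>
    pre_of_forced (hwr w hwS hwt) (fun H hH hW => hforced w hwS hwt H hH hW t htS)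
  have hnotmem : ∀ w ∈ S, w ≠ t → w ∉ (C G r t).verts := by
    intro w hwS hwt hmem
    by_cases htr : t = r
    · subst htr
      rw [C_eq_self] at hmem
      exact hwr w hwS hwt hmem
    · rw [C_eq_of_ne htr] at hmem
      have hwK : w ∈ Kverts G r S := hmem (Ksub G r S) (Ksub_isCactus hG r hS)
        (Set.insert_subset_iff.2 ⟨r_mem_Kverts G r S, Set.singleton_subset_iff.2 htK⟩)
      exact hwt (Kverts_inter_unique hG.2 hS hwS hwK htS htK)
  have hnot_pre : ∀ w ∈ S, w ≠ t → ¬ pre G r w t := by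
    intro w hwS hwt hle
    exact hnotmem w hwS hwt (hle.1 (self_mem_C r w))
  refine ⟨t, htS, ?_, ?_, hrt, ?_⟩
  · exact fun w hwS hwt => ⟨hpre_t w hwS hwt, hnot_pre w hwS hwt⟩
  · intro v hvS w hwS hvt hwt
    constructor
    · exact pre_of_forced (hwr w hwS hwt) (fun H hH hW => hforced w hwS hwt H hH hW v hvS)
    · exact pre_of_forced (hwr v hvS hvt) (fun H hH hW => hforced v hvS hvt H hH hW w hwS)
  · intro hrS
    have htr : t ≠ r := fun h => hrS (h ▸ htS)
    obtain ⟨-, q, hq⟩ := id htK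
    have hqne := isWalkFromTo_ne_nil hq
    obtain ⟨q0, q', rfl⟩ := List.exists_cons_of_ne_nil hqne
    have hq0 : q0 = t := by have := hq.2.1; simpa using this
    cases q' with
    | nil =>
      have hq0r : q0 = r := by have := hq.2.2; simpa using this
      exact absurd (hq0.symm.trans hq0r) htr
    | cons b rest =>
      have hadj : (avoidArcs G S).Adj q0 b := hq.1.1
      have hGadj : G.Adj t b := by rw [← hq0]; exact hadj.1
      have hnotS : (t, b) ∉ arcs S := by rw [← hq0]; exact hadj.2
      obtain ⟨p, hpc, hpm⟩ := (hG.2 t b hGadj).1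
      have htp : t ∈ p := (mem_of_mem_arcs hpm).1
      have hneq : ¬ CycleEquiv p S := fun he => hnotS ((he (t, b)).1 hpm)
      refine ⟨⟨p, S, hpc, hS, hneq, htp, htS⟩, ?_⟩
      intro c hcS hc
      by_cases hct : c = t
      · subst hct; exact pre_refl r c
      · exact hpre_t c hcS hct
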